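/- In G = ℤ² ⋊ ℤ/2ℤ (swap action) with a = ((1,0),0), t = ((0,0),1), the word length of the element ((x,y),0) with y ≠ 0 is |x| + |y| + 2, and the word length of ((x,0),0) is |x|. -/

import Mathlib

/-- The coordinate-swapping automorphism of ℤ². -/
def swapAut : MulAut (Multiplicative (ℤ × ℤ)) :=
  AddEquiv.toMultiplicative (AddEquiv.prodComm : (ℤ × ℤ) ≃+ (ℤ × ℤ))

lemma swapAut_sq : swapAut ^ 2 = 1 := by
  refine MulEquiv.ext fun z => ?_
  show swapAut (swapAut z) = z
  cases z
  rfl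

/-- The action of ℤ/2ℤ on ℤ² by swapping the two coordinates. -/
def swapAction : Multiplicative (ZMod 2) →* MulAut (Multiplicative (ℤ × ℤ)) where
  toFun ε := swapAut ^ (Multiplicative.toAdd ε).val
  map_one' := rfl
  map_mul' x y := by
    show swapAut ^ _ = swapAut ^ _ * swapAut ^ _
    rw [← pow_add]
    have key : ∀ m n : ℕ, m % 2 = n % 2 → swapAut ^ m = swapAut ^ n := by
      intro m n h
      rw [← Nat.div_add_mod m 2, ← Nat.div_add_mod n 2, h, pow_add, pow_add,
        pow_mul, pow_mul, swapAut_sq]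
      simp
    apply key
    have := ZMod.val_add (Multiplicative.toAdd x) (Multiplicative.toAdd y)
    simp only [toAdd_mul] at *
    omega

/-- The group G = ℤ² ⋊ ℤ/2ℤ with the swap action. -/
abbrev GG := SemidirectProduct (Multiplicative (ℤ × ℤ)) (Multiplicative (ZMod 2)) swapAction

/-- The generator a = ((1,0), 0). -/
def ga : GG := SemidirectProduct.inl (Multiplicative.ofAdd ((1, 0) : ℤ × ℤ))

/-- The generator t = ((0,0), 1). -/
def gt : GG := SemidirectProduct.inr (Multiplicative.ofAdd (1 : ZMod 2))

/-- The element ((x,y), ε) of G. -/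
def el (x y : ℤ) (ε : ZMod 2) : GG :=
  ⟨Multiplicative.ofAdd (x, y), Multiplicative.ofAdd ε⟩

/-- The generating set A = {a, a⁻¹, t, t⁻¹}. -/
def GenSet : Set GG := {ga, ga⁻¹, gt, gt⁻¹}

/-- `w` is a word over the alphabet A. -/
def IsWord (w : List GG) : Prop := ∀ x ∈ w, x ∈ GenSet

/-- `w` is a word over A representing the group element `g` (via its product). -/
def Represents (w : List GG) (g : GG) : Prop := IsWord w ∧ w.prod = g

/-- The word length of `g`: minimal length of a word over A representing `g`. -/
noncomputable def wordLength (g : GG) : ℕ :=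
  sInf {n | ∃ w : List GG, Represents w g ∧ w.length = n}

/-- A word over A is geodesic if no strictly shorter word over A represents
the same element. -/
def IsGeodesic (w : List GG) : Prop :=
  IsWord w ∧ ∀ v : List GG, IsWord v → v.prod = w.prod → w.length ≤ v.length

open Classical in
/-- The number of t-letters of a word (occurrences of t and t⁻¹). -/
noncomputable def tCount (w : List GG) : ℕ :=
  w.countP (fun x => decide (x = gt ∨ x = gt⁻¹))

/-- The word aˣ over A: x letters `a` if x ≥ 0, |x| letters `a⁻¹` if x < 0. -/
def apow (x : ℤ) : List GG :=
  if 0 ≤ x then List.replicate x.toNat ga else List.replicate (-x).toNat ga⁻¹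

/-- The word metric on G with respect to A. -/
noncomputable def dA (g h : GG) : ℕ := wordLength (g⁻¹ * h)

/-- The point of G reached at time i along the word w (the endpoint if i
exceeds the length of w). -/
def pt (w : List GG) (i : ℕ) : GG := (w.take i).prod

/-- Words u and w synchronously k-fellow travel. -/
def FellowTravels (k : ℕ) (u w : List GG) : Prop :=
  ∀ i : ℕ, dA (pt u i) (pt w i) ≤ k
open Multiplicative

lemma exists_el (g : GG) : ∃ x y ε, g = el x y ε := by
  obtain ⟨l, r⟩ := g
  exact ⟨(toAdd l).1, (toAdd l).2, toAdd r, rfl⟩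

lemma el_zero : el 0 0 0 = 1 := rfl

lemma ga_def : ga = el 1 0 0 := rfl
lemma gt_def : gt = el 0 0 1 := rfl

lemma zmod_cases (e : ZMod 2) : e = 0 ∨ e = 1 := by revert e; decide

lemma el_mul_left0 (x y x' y' : ℤ) (ε' : ZMod 2) :
    el x y 0 * el x' y' ε' = el (x + x') (y + y') ε' := by
  refine SemidirectProduct.ext ?_ ?_
  · show ofAdd (x, y) * swapAction (ofAdd 0) (ofAdd (x', y')) = ofAdd (x + x', y + y')
    have h : swapAction (ofAdd (0 : ZMod 2)) = 1 := by
      show swapAut ^ (ZMod.val (0 : ZMod 2)) = 1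
      simp [ZMod.val_zero]
    rw [h]; rfl
  · show ofAdd (0 : ZMod 2) * ofAdd ε' = ofAdd ε'
    rw [← ofAdd_add, zero_add]

lemma el_mul_left1 (x y x' y' : ℤ) (ε' : ZMod 2) :
    el x y 1 * el x' y' ε' = el (x + y') (y + x') (1 + ε') := by
  refine SemidirectProduct.ext ?_ ?_
  · show ofAdd (x, y) * swapAction (ofAdd 1) (ofAdd (x', y')) = ofAdd (x + y', y + x')
    have h : swapAction (ofAdd (1 : ZMod 2)) = swapAut := by
      show swapAut ^ (ZMod.val (1 : ZMod 2)) = swapAut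
      simp [ZMod.val_one]
    rw [h]; rfl
  · show ofAdd (1 : ZMod 2) * ofAdd ε' = ofAdd (1 + ε')
    rw [← ofAdd_add]

lemma ga_inv : ga⁻¹ = el (-1) 0 0 := by
  symm
  apply eq_inv_of_mul_eq_one_right
  rw [ga_def, el_mul_left0]
  norm_num [el_zero]

lemma gt_inv : gt⁻¹ = gt := by
  symm
  apply eq_inv_of_mul_eq_one_right
  rw [gt_def, el_mul_left1, show (1 + 1 : ZMod 2) = 0 by decide]
  norm_num [el_zero]

/-- cost of the ZMod-2 part -/
def cost (y : ℤ) (ε : ZMod 2) : ℕ := if ε = 0 then (if y = 0 then 0 else 2) else 1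

def NN (g : GG) : ℕ :=
  (toAdd g.left).1.natAbs + (toAdd g.left).2.natAbs
    + cost (toAdd g.left).2 (toAdd g.right)

lemma NN_el (x y : ℤ) (ε : ZMod 2) : NN (el x y ε) = x.natAbs + y.natAbs + cost y ε := rfl

lemma NN_step (s : GG) (hs : s ∈ GenSet) (g : GG) : NN (s * g) ≤ NN g + 1 := by
  obtain ⟨x, y, ε, rfl⟩ := exists_el g
  have hc : ∀ z : ℤ, ∀ e : ZMod 2, cost z e ≤ 2 := by
    intro z e; unfold cost; split <;> (try split) <;> omega
  have c1 : ∀ z : ℤ, cost z 1 = 1 := fun z => by simp [cost]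
  have e10 : (1 + 0 : ZMod 2) = 1 := by decide
  have e11 : (1 + 1 : ZMod 2) = 0 := by decide
  rcases hs with h | h | h | h <;> subst h
  · rw [ga_def, el_mul_left0, NN_el, NN_el]
    simp only [zero_add]; omega
  · rw [ga_inv, el_mul_left0, NN_el, NN_el]
    simp only [zero_add]; omega
  · rw [gt_def, el_mul_left1, NN_el, NN_el]
    have hx := hc x 0; have hy := hc y 0
    rcases zmod_cases ε with h | h <;> subst h <;>
      simp only [e10, e11, c1, zero_add] <;> omega
  · rw [gt_inv, gt_def, el_mul_left1, NN_el, NN_el]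
    have hx := hc x 0; have hy := hc y 0
    rcases zmod_cases ε with h | h <;> subst h <;>
      simp only [e10, e11, c1, zero_add] <;> omega

lemma NN_prod_le (w : List GG) (hw : IsWord w) : NN w.prod ≤ w.length := by
  induction w with
  | nil => simp [List.prod_nil, ← el_zero, NN_el, cost]
  | cons s w ih =>
    rw [List.prod_cons]
    have h1 := NN_step s (hw s List.mem_cons_self) w.prod
    have h2 := ih (fun x hx => hw x (List.mem_cons_of_mem s hx))
    simp only [List.length_cons]
    omega

lemma ga_pow (n : ℕ) : (ga : GG) ^ n = el n 0 0 := by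
  induction n with
  | zero => simp [← el_zero]
  | succ k ih =>
    rw [pow_succ, ih, ga_def]
    -- el k 0 0 * el 1 0 0
    rw [el_mul_left0]
    norm_num

lemma ga_inv_pow (n : ℕ) : (ga⁻¹ : GG) ^ n = el (-n) 0 0 := by
  induction n with
  | zero => simp [← el_zero]
  | succ k ih =>
    rw [pow_succ, ih, ga_inv, el_mul_left0]
    norm_num
    ring_nf

lemma apow_prod (x : ℤ) : (apow x).prod = el x 0 0 := by
  unfold apow
  split
  · rw [List.prod_replicate, ga_pow]
    congr 1
    omega
  · rw [List.prod_replicate, ga_inv_pow]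
    congr 1
    omega

lemma apow_length (x : ℤ) : (apow x).length = x.natAbs := by
  unfold apow; split <;> simp [List.length_replicate] <;> omega

lemma apow_isword (x : ℤ) : IsWord (apow x) := by
  intro s hs
  unfold apow at hs
  split at hs <;> rw [List.eq_of_mem_replicate hs] <;> simp [GenSet]

lemma word0 (x : ℤ) : Represents (apow x) (el x 0 0) :=
  ⟨apow_isword x, apow_prod x⟩

lemma word2 (x y : ℤ) : Represents (apow x ++ [gt] ++ apow y ++ [gt]) (el x y 0) := by
  constructor
  · intro s hs
    simp only [List.mem_append, List.mem_singleton] at hs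
    rcases hs with ((h | h) | h) | h
    · exact apow_isword x s h
    · rw [h]; simp [GenSet]
    · exact apow_isword y s h
    · rw [h]; simp [GenSet]
  · rw [List.prod_append, List.prod_append, List.prod_append]
    simp only [List.prod_singleton, apow_prod, gt_def]
    rw [mul_assoc, mul_assoc, el_mul_left0, el_mul_left1, el_mul_left0]
    norm_num
    exact congrArg (el x y) (by decide)

lemma wordLength_eq (g : GG) (w : List GG) (hw : Represents w g) (h : w.length = NN g) :
    wordLength g = NN g := by
  unfold wordLength
  apply le_antisymm
  · exact Nat.sInf_le ⟨w, hw, h⟩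
  · obtain ⟨v, hv, hl⟩ := Nat.sInf_mem (⟨w.length, w, hw, rfl⟩ :
      {n | ∃ w, Represents w g ∧ w.length = n}.Nonempty)
    calc NN g = NN v.prod := by rw [hv.2]
    _ ≤ v.length := NN_prod_le v hv.1
    _ = _ := hl

theorem wordLength_bottom' (x y : ℤ) :
    (y ≠ 0 → wordLength (el x y 0) = x.natAbs + y.natAbs + 2) ∧
    wordLength (el x 0 0) = x.natAbs := by
  constructor
  · intro hy
    have hN : NN (el x y 0) = x.natAbs + y.natAbs + 2 := by
      rw [NN_el]; simp [cost, hy]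
    have hlen : (apow x ++ [gt] ++ apow y ++ [gt]).length = NN (el x y 0) := by
      simp [apow_length, hN]
      omega
    rw [wordLength_eq _ _ (word2 x y) hlen, hN]
  · have hN : NN (el x 0 0) = x.natAbs := by
      rw [NN_el]; simp [cost]
    have hlen : (apow x).length = NN (el x 0 0) := by rw [apow_length, hN]
    rw [wordLength_eq _ _ (word0 x) hlen, hN]

/-- The word length of ((x,y),0) is |x| + |y| + 2 when y ≠ 0, and the word
length of ((x,0),0) is |x|. -/
theorem wordLength_bottom (x y : ℤ) :
    (y ≠ 0 → wordLength (el x y 0) = x.natAbs + y.natAbs + 2) ∧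
    wordLength (el x 0 0) = x.natAbs := wordLength_bottom' x y
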